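/- Let q ≥ 1 be an integer, let γ_{2q} ∈ S_{2q} be the full cycle sending i ↦ i−1 (mod 2q) and γ_q ∈ S_q the full cycle sending i ↦ i−1 (mod q). Given arbitrary permutations α_1, α_2 ∈ S_q, define α̃_1, α̃_2 ∈ S_{2q} by α̃_1(2i−1) = 2α_1(i)−1 and α̃_1(2i) = 2i, respectively α̃_2(2i) = 2α_2(i) and α̃_2(2i−1) = 2i−1, for i = 1,…,q. Then the number of cycles of the permutation γ_{2q}^{−1} ∘ (α̃_1 ∘ α̃_2) equals the number of cycles of α_1 ∘ γ_q^{−1} ∘ α_2. -/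

import Mathlib

noncomputable section

/-- The number of cycles of a permutation (counting fixed points as cycles), i.e. the
number of orbits of the permutation. -/
def numCycles {α : Type*} (σ : Equiv.Perm α) : ℕ :=
  Nat.card (Quotient (Setoid.mk σ.SameCycle
    ⟨fun _ => Equiv.Perm.SameCycle.refl σ _,
     fun h => h.symm, fun h₁ h₂ => h₁.trans h₂⟩))

theorem Equiv.Perm.apply_inv_self {α : Type*} (f : Equiv.Perm α) (x : α) : f (f⁻¹ x) = x :=
  f.apply_symm_apply x

/-- interlacing two permutations acting on odd resp. even positions of
{0,…,2q−1} and composing with the full cycle γ_{2q} : i ↦ i−1 yields as many cycles as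
α₁ ∘ γ_q⁻¹ ∘ α₂. (Positions are 0-indexed: the paper's odd elements 2i−1 correspond to
the even 0-indexed positions 2i, and the paper's even elements 2i to positions 2i+1.) -/
theorem numCycles_interleave (q : ℕ) (hq : 1 ≤ q)
    (γ2q : Equiv.Perm (Fin (2 * q))) (hγ2q : ∀ i, γ2q i = i - ⟨1 % (2 * q), Nat.mod_lt _ (by omega)⟩)
    (γq : Equiv.Perm (Fin q)) (hγq : ∀ i, γq i = i - ⟨1 % q, Nat.mod_lt _ (by omega)⟩)
    (α₁ α₂ : Equiv.Perm (Fin q)) (tα₁ tα₂ : Equiv.Perm (Fin (2 * q)))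
    (htα₁odd : ∀ i : Fin q,
      tα₁ ⟨2 * i.1, by have := i.2; omega⟩ = ⟨2 * (α₁ i).1, by have := (α₁ i).2; omega⟩)
    (htα₁even : ∀ i : Fin q,
      tα₁ ⟨2 * i.1 + 1, by have := i.2; omega⟩ = ⟨2 * i.1 + 1, by have := i.2; omega⟩)
    (htα₂odd : ∀ i : Fin q,
      tα₂ ⟨2 * i.1, by have := i.2; omega⟩ = ⟨2 * i.1, by have := i.2; omega⟩)
    (htα₂even : ∀ i : Fin q,
      tα₂ ⟨2 * i.1 + 1, by have := i.2; omega⟩ =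
        ⟨2 * (α₂ i).1 + 1, by have := (α₂ i).2; omega⟩) :
    numCycles (γ2q⁻¹ * (tα₁ * tα₂)) = numCycles (α₁ * γq⁻¹ * α₂) := by
  have hq2 : 0 < 2 * q := by omega
  haveI : NeZero (2 * q) := ⟨by omega⟩
  haveI : NeZero q := ⟨by omega⟩
  set σ := γ2q⁻¹ * (tα₁ * tα₂) with hσdef
  set τ := α₁ * γq⁻¹ * α₂ with hτdef
  -- inverses of the full cycles
  have hγ2qinv : ∀ z : Fin (2 * q),
      γ2q⁻¹ z = z + ⟨1 % (2 * q), Nat.mod_lt _ hq2⟩ := by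
    intro z
    have h : γ2q (z + ⟨1 % (2 * q), Nat.mod_lt _ hq2⟩) = z := by
      rw [hγ2q]; exact add_sub_cancel_right z _
    apply γ2q.injective
    rw [Equiv.Perm.apply_inv_self]
    exact h.symm
  have hγqinv : ∀ z : Fin q,
      γq⁻¹ z = z + ⟨1 % q, Nat.mod_lt _ (by omega)⟩ := by
    intro z
    have h : γq (z + ⟨1 % q, Nat.mod_lt _ (by omega)⟩) = z := by
      rw [hγq]; exact add_sub_cancel_right z _
    apply γq.injective
    rw [Equiv.Perm.apply_inv_self]
    exact h.symm
  have h1mod : 1 % (2 * q) = 1 := Nat.mod_eq_of_lt (by omega)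
  -- action of σ on even and odd positions
  have hσeven : ∀ i : Fin q,
      σ ⟨2 * i.1, by have := i.2; omega⟩ = ⟨2 * (α₁ i).1 + 1, by have := (α₁ i).2; omega⟩ := by
    intro i
    simp only [hσdef, Equiv.Perm.mul_apply]
    rw [htα₂odd i, htα₁odd i, hγ2qinv]
    apply Fin.ext
    rw [Fin.val_add]
    show (2 * (α₁ i).1 + 1 % (2 * q)) % (2 * q) = 2 * (α₁ i).1 + 1
    rw [h1mod]
    exact Nat.mod_eq_of_lt (by have := (α₁ i).2; omega)
  have hσodd : ∀ i : Fin q,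
      σ ⟨2 * i.1 + 1, by have := i.2; omega⟩
        = ⟨2 * (γq⁻¹ (α₂ i)).1, by have := (γq⁻¹ (α₂ i)).2; omega⟩ := by
    intro i
    simp only [hσdef, Equiv.Perm.mul_apply]
    rw [htα₂even i, htα₁even (α₂ i), hγ2qinv]
    apply Fin.ext
    rw [Fin.val_add]
    show _ = 2 * (γq⁻¹ (α₂ i)).1
    rw [hγqinv]
    show (2 * (α₂ i).1 + 1 + 1 % (2 * q)) % (2 * q) = 2 * ((α₂ i) + ⟨1 % q, _⟩ : Fin q).1
    rw [h1mod, Fin.val_add]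
    show (2 * (α₂ i).1 + 1 + 1) % (2 * q) = 2 * (((α₂ i).1 + 1 % q) % q)
    have e1 : 2 * (α₂ i).1 + 1 + 1 = 2 * ((α₂ i).1 + 1) := by ring
    have e2 : ((α₂ i).1 + 1 % q) % q = ((α₂ i).1 + 1) % q := by
      conv_rhs => rw [Nat.add_mod]
      rw [Nat.mod_eq_of_lt (α₂ i).2]
    rw [e1, e2, Nat.mul_mod_mul_left]
  have hτapp : ∀ i : Fin q, τ i = α₁ (γq⁻¹ (α₂ i)) := by
    intro i; simp [hτdef, Equiv.Perm.mul_apply]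
  -- the collapsing map g
  have hhalf : ∀ x : Fin (2 * q), x.1 / 2 < q := fun x => by have := x.2; omega
  set g : Fin (2 * q) → Fin q :=
    fun x => if x.1 % 2 = 0 then α₁ ⟨x.1 / 2, hhalf x⟩ else ⟨x.1 / 2, hhalf x⟩ with hg
  have hgeven : ∀ i : Fin q, g ⟨2 * i.1, by have := i.2; omega⟩ = α₁ i := by
    intro i
    simp only [hg]
    rw [if_pos (by omega)]
    congr 1
    exact Fin.ext (by show 2 * i.1 / 2 = i.1; omega)
  have hgodd : ∀ i : Fin q, g ⟨2 * i.1 + 1, by have := i.2; omega⟩ = i := by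
    intro i
    simp only [hg]
    rw [if_neg (by omega)]
    exact Fin.ext (by show (2 * i.1 + 1) / 2 = i.1; omega)
  -- parity case split
  have hcases : ∀ x : Fin (2 * q),
      (∃ i : Fin q, x = ⟨2 * i.1, by have := i.2; omega⟩) ∨
      (∃ i : Fin q, x = ⟨2 * i.1 + 1, by have := i.2; omega⟩) := by
    intro x
    have hx := x.2
    rcases Nat.even_or_odd x.1 with ⟨i, hi⟩ | ⟨i, hi⟩
    · exact Or.inl ⟨⟨i, by omega⟩, by apply Fin.ext; show x.1 = 2 * i; omega⟩
    · exact Or.inr ⟨⟨i, by omega⟩, by apply Fin.ext; show x.1 = 2 * i + 1; omega⟩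
  -- behavior of g along σ
  have hgσeven : ∀ i : Fin q,
      g (σ ⟨2 * i.1, by have := i.2; omega⟩) = g ⟨2 * i.1, by have := i.2; omega⟩ := by
    intro i; rw [hσeven i, hgodd (α₁ i), hgeven i]
  have hgσodd : ∀ i : Fin q,
      g (σ ⟨2 * i.1 + 1, by have := i.2; omega⟩)
        = τ (g ⟨2 * i.1 + 1, by have := i.2; omega⟩) := by
    intro i; rw [hσodd i, hgeven (γq⁻¹ (α₂ i)), hgodd i, hτapp i]
  have step : ∀ x : Fin (2 * q), τ.SameCycle (g x) (g (σ x)) := by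
    intro x
    rcases hcases x with ⟨i, rfl⟩ | ⟨i, rfl⟩
    · rw [hgσeven i]
    · rw [hgσodd i]; exact ⟨1, by rw [zpow_one]⟩
  have step' : ∀ y : Fin (2 * q), τ.SameCycle (g y) (g (σ⁻¹ y)) := by
    intro y
    have h := step (σ⁻¹ y)
    rw [Equiv.Perm.apply_inv_self] at h
    exact h.symm
  -- semiconjugacy : g ∘ σ² = τ ∘ g
  have hA : ∀ x : Fin (2 * q), g (σ (σ x)) = τ (g x) := by
    intro x
    rcases hcases x with ⟨i, rfl⟩ | ⟨i, rfl⟩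
    · rw [hσeven i, hgσodd (α₁ i), hgodd (α₁ i), hgeven i]
    · rw [hσodd i, hgσeven (γq⁻¹ (α₂ i)), hgeven (γq⁻¹ (α₂ i)), hgodd i, hτapp i]
  have hAinv : ∀ x : Fin (2 * q), g ((σ * σ)⁻¹ x) = τ⁻¹ (g x) := by
    intro x
    have h := hA ((σ * σ)⁻¹ x)
    rw [← Equiv.Perm.mul_apply, Equiv.Perm.apply_inv_self] at h
    apply τ.injective
    rw [Equiv.Perm.apply_inv_self]
    exact h.symm
  have hA2 : ∀ x : Fin (2 * q), g ((σ * σ) x) = τ (g x) := hA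
  have hAn : ∀ (n : ℤ) (x : Fin (2 * q)), g (((σ * σ) ^ n) x) = (τ ^ n) (g x) := by
    intro n
    induction n using Int.induction_on with
    | zero => simp
    | succ n ih =>
      intro x
      have e1 : ((n : ℤ) + 1) = 1 + n := by ring
      rw [e1, zpow_add, zpow_one, zpow_add, zpow_one]
      show g ((σ * σ) (((σ * σ) ^ (n : ℤ)) x)) = τ ((τ ^ (n : ℤ)) (g x))
      rw [hA2, ih]
    | pred n ih =>
      intro x
      have e1 : (-(n : ℤ) - 1) = (-(n : ℤ)) + (-1) := by ring
      rw [e1, zpow_add, zpow_neg_one, zpow_add, zpow_neg_one]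
      show g (((σ * σ) ^ (-(n : ℤ))) ((σ * σ)⁻¹ x)) = (τ ^ (-(n : ℤ))) (τ⁻¹ (g x))
      rw [ih, hAinv]
  -- forward direction on cycles
  have hstepall : ∀ (n : ℤ) (x : Fin (2 * q)), τ.SameCycle (g x) (g ((σ ^ n) x)) := by
    intro n
    induction n using Int.induction_on with
    | zero =>
      intro x
      rw [zpow_zero]
      exact Equiv.Perm.SameCycle.refl τ (g x)
    | succ n ih =>
      intro x
      have e1 : ((n : ℤ) + 1) = 1 + n := by ring
      rw [e1, zpow_add, zpow_one]
      exact (ih x).trans (step ((σ ^ (n : ℤ)) x))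
    | pred n ih =>
      intro x
      have e1 : (-(n : ℤ) - 1) = (-1) + (-(n : ℤ)) := by ring
      rw [e1, zpow_add, zpow_neg_one]
      exact (ih x).trans (step' ((σ ^ (-(n : ℤ))) x))
  have hfwd : ∀ x y : Fin (2 * q), σ.SameCycle x y → τ.SameCycle (g x) (g y) := by
    rintro x y ⟨n, rfl⟩
    exact hstepall n x
  -- fibers of g lie in single σ-cycles
  have hfib : ∀ x y : Fin (2 * q), g x = g y → σ.SameCycle x y := by
    intro x y hxy
    rcases hcases x with ⟨i, rfl⟩ | ⟨i, rfl⟩ <;> rcases hcases y with ⟨j, rfl⟩ | ⟨j, rfl⟩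
    · rw [hgeven i, hgeven j] at hxy
      rw [α₁.injective hxy]
    · rw [hgeven i, hgodd j] at hxy
      refine ⟨1, ?_⟩
      rw [zpow_one, hσeven i]
      exact Fin.ext (by show 2 * (α₁ i).1 + 1 = 2 * j.1 + 1; rw [hxy])
    · rw [hgodd i, hgeven j] at hxy
      refine Equiv.Perm.SameCycle.symm ⟨1, ?_⟩
      rw [zpow_one, hσeven j]
      exact Fin.ext (by show 2 * (α₁ j).1 + 1 = 2 * i.1 + 1; rw [← hxy])
    · rw [hgodd i, hgodd j] at hxy
      rw [hxy]
  -- backward direction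
  have hbwd : ∀ x y : Fin (2 * q), τ.SameCycle (g x) (g y) → σ.SameCycle x y := by
    rintro x y ⟨n, hn⟩
    have h1 := hAn n x
    rw [hn] at h1
    have h2 := hfib _ _ h1
    have h3 : σ.SameCycle x (((σ * σ) ^ n) x) := ⟨2 * n, by rw [zpow_mul, zpow_two]⟩
    exact h3.trans h2
  -- conclude via a bijection of quotients
  unfold numCycles
  refine Nat.card_congr (Equiv.ofBijective (Quotient.map g (fun x y h => hfwd x y h)) ⟨?_, ?_⟩)
  · intro a b
    refine Quotient.inductionOn₂ a b (fun x y h => ?_)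
    rw [Quotient.map_mk, Quotient.map_mk] at h
    exact Quotient.sound (hbwd x y (Quotient.exact h))
  · intro b
    refine Quotient.inductionOn b (fun j => ?_)
    refine ⟨Quotient.mk _ (⟨2 * j.1 + 1, by have := j.2; omega⟩ : Fin (2 * q)), ?_⟩
    rw [Quotient.map_mk]
    exact congrArg _ (hgodd j)

end
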